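/- Let X_1, …, X_N be i.i.d. Bernoulli random variables with success probability p ≤ e^{−nβ}, where N = e^{nα}, n is a positive integer, α > 0, 0 ≤ β < α, and ρ > 0. Then E[(1 + Σ_{i=1}^N X_i)^ρ] ≤ γ e^{nρ(α−β)}, where γ = max{e^{e^ρ−1}, (⌈ρ⌉!)² ⌈ρ⌉}. -/

import Mathlib

open MeasureTheory ProbabilityTheory

lemma aux_exp_le_inv_one_sub {x : ℝ} (hx : x < 1) : Real.exp x ≤ (1 - x)⁻¹ := by
  have h1 : 1 - x ≤ Real.exp (-x) := by
    have := Real.add_one_le_exp (-x); linarith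
  have h2 : 0 < 1 - x := by linarith
  rw [Real.exp_neg] at h1
  exact (le_inv_comm₀ h2 (Real.exp_pos x)).mp h1

lemma aux_pow_self_le_sq_factorial (m : ℕ) : m ^ m ≤ (Nat.factorial m) ^ 2 := by
  have h1 : ∏ i ∈ Finset.range m, (m - i) = Nat.factorial m := by
    rw [← Finset.prod_range_add_one_eq_factorial m]
    rw [← Finset.prod_range_reflect (fun j => j + 1) m]
    apply Finset.prod_congr rfl
    intro i hi
    have : i < m := Finset.mem_range.mp hi
    omega
  calc m ^ m = ∏ _i ∈ Finset.range m, m := by rw [Finset.prod_const, Finset.card_range]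
    _ ≤ ∏ i ∈ Finset.range m, (i + 1) * (m - i) := by
        apply Finset.prod_le_prod'
        intro i hi
        have hi' : i < m := Finset.mem_range.mp hi
        have h2 : 1 ≤ m - i := by omega
        calc m = i + (m - i) := by omega
          _ ≤ i * (m - i) + (m - i) := by nlinarith
          _ = (i + 1) * (m - i) := by ring
    _ = (∏ i ∈ Finset.range m, (i + 1)) * ∏ i ∈ Finset.range m, (m - i) := by
        rw [← Finset.prod_mul_distrib]
    _ = Nat.factorial m ^ 2 := by rw [Finset.prod_range_add_one_eq_factorial, h1, sq]

lemma aux_rpow_le_exp {x t ρ : ℝ} (hx : 0 < x) (ht : 0 < t) (hρ : 0 < ρ) :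
    x ^ ρ ≤ (ρ / (Real.exp 1 * t)) ^ ρ * Real.exp (t * x) := by
  have hb : 0 < ρ / (Real.exp 1 * t) := by positivity
  rw [Real.rpow_def_of_pos hx, Real.rpow_def_of_pos hb, ← Real.exp_add, Real.exp_le_exp]
  have h1 : Real.log (x * t / ρ) ≤ x * t / ρ - 1 := Real.log_le_sub_one_of_pos (by positivity)
  have h2 : Real.log (x * t / ρ) = Real.log x + Real.log t - Real.log ρ := by
    rw [Real.log_div (by positivity) (by positivity), Real.log_mul hx.ne' ht.ne']
  have h3 : Real.log (ρ / (Real.exp 1 * t)) = Real.log ρ - (1 + Real.log t) := by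
    rw [Real.log_div (by positivity) (by positivity), Real.log_mul (Real.exp_pos 1).ne' ht.ne',
      Real.log_exp]
  rw [h3]
  have h4 := mul_le_mul_of_nonneg_right (h2 ▸ h1) hρ.le
  have h5 : (x * t / ρ - 1) * ρ = x * t - ρ := by field_simp
  nlinarith

set_option maxHeartbeats 1000000 in
theorem binomial_one_add_rpow_moment_le_of_lt {Ω : Type*} [MeasurableSpace Ω]
    (μ : Measure Ω) [IsProbabilityMeasure μ]
    (n : ℕ) (hn : 0 < n) (α β ρ p : ℝ) (hα : 0 < α) (hβ0 : 0 ≤ β) (hβ : β < α) (hρ : 0 < ρ)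
    (N : ℕ) (hN : N = ⌊Real.exp (n * α)⌋₊)
    (X : Fin N → Ω → ℝ) (hmeas : ∀ i, Measurable (X i))
    (hval : ∀ i ω, X i ω = 0 ∨ X i ω = 1)
    (hindep : iIndepFun X μ)
    (hid : ∀ i, μ {ω | X i ω = 1} = ENNReal.ofReal p)
    (hp : p ≤ Real.exp (-(n * β))) :
    ∫ ω, (1 + ∑ i, X i ω) ^ ρ ∂μ ≤
      max (Real.exp (Real.exp ρ - 1)) (((Nat.factorial ⌈ρ⌉₊ : ℝ)) ^ 2 * (⌈ρ⌉₊ : ℝ))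
            * Real.exp (n * ρ * (α - β)) := by
  classical
  set γ := max (Real.exp (Real.exp ρ - 1)) (((Nat.factorial ⌈ρ⌉₊ : ℝ)) ^ 2 * (⌈ρ⌉₊ : ℝ)) with hγ
  set q := max p 0 with hqdef
  have hq0 : 0 ≤ q := le_max_right _ _
  have hq : q ≤ Real.exp (-((n : ℝ) * β)) := max_le hp (Real.exp_nonneg _)
  have hidq : ∀ i, μ {ω | X i ω = 1} = ENNReal.ofReal q := by
    intro i; rw [hid i]
    rcases le_or_gt 0 p with h | h
    · rw [hqdef, max_eq_left h]
    · rw [ENNReal.ofReal_of_nonpos h.le, hqdef, max_eq_right h.le, ENNReal.ofReal_zero]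
  set S : Ω → ℝ := fun ω => ∑ i, X i ω with hS
  have hSmeas : Measurable S := Finset.measurable_sum _ (fun i _ => hmeas i)
  have hS0 : ∀ ω, 0 ≤ S ω := fun ω =>
    Finset.sum_nonneg (fun i _ => by rcases hval i ω with h | h <;> simp [h])
  have hSN : ∀ ω, S ω ≤ N := by
    intro ω
    calc S ω ≤ ∑ _i : Fin N, (1 : ℝ) :=
          Finset.sum_le_sum (fun i _ => by rcases hval i ω with h | h <;> simp [h])
      _ = N := by simp
  have hAmeas : ∀ i, MeasurableSet {ω | X i ω = 1} := fun i =>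
    (hmeas i) (measurableSet_singleton 1)
  have hXind : ∀ i, X i = Set.indicator {ω | X i ω = 1} (fun _ => (1 : ℝ)) := by
    intro i; funext ω
    rcases hval i ω with h | h
    · rw [h, eq_comm, Set.indicator_apply_eq_zero]
      intro hmem
      exact absurd (Set.mem_setOf.mp hmem) (by rw [h]; norm_num)
    · rw [h]; exact (Set.indicator_of_mem (show ω ∈ {ω | X i ω = 1} from h)
        (fun _ => (1:ℝ))).symm
  have hXint : ∀ i, Integrable (X i) μ := by
    intro i; rw [hXind i]
    exact (integrable_const 1).indicator (hAmeas i)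
  have hXval : ∀ i, ∫ ω, X i ω ∂μ = q := by
    intro i
    have : ∫ ω, X i ω ∂μ = ∫ ω, Set.indicator {ω | X i ω = 1} (fun _ => (1 : ℝ)) ω ∂μ := by
      rw [← hXind i]
    rw [this, integral_indicator_const (1 : ℝ) (hAmeas i), measureReal_def, hidq i,
      ENNReal.toReal_ofReal hq0, smul_eq_mul, mul_one]
  have hSint : Integrable S μ := integrable_finset_sum _ (fun i _ => hXint i)
  have hSval : ∫ ω, S ω ∂μ = (N : ℝ) * q := by
    rw [hS]
    rw [integral_finset_sum _ (fun i _ => hXint i)]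
    simp [hXval, Finset.card_univ, mul_comm]
  set u := (N : ℝ) * q with hu
  have hu0 : 0 ≤ u := mul_nonneg (Nat.cast_nonneg N) hq0
  set lam := Real.exp ((n : ℝ) * (α - β)) with hlam
  have hlam1 : 1 ≤ lam := Real.one_le_exp (by
    have h0n : (0:ℝ) ≤ (n:ℝ) := Nat.cast_nonneg n
    nlinarith)
  have hulam : u ≤ lam := by
    have hNle : (N : ℝ) ≤ Real.exp ((n : ℝ) * α) := by
      rw [hN]; exact Nat.floor_le (Real.exp_nonneg _)
    calc u ≤ Real.exp ((n : ℝ) * α) * Real.exp (-((n : ℝ) * β)) :=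
          mul_le_mul hNle hq hq0 (Real.exp_nonneg _)
      _ = lam := by rw [← Real.exp_add, hlam]; ring_nf
  have hlamrho : lam ^ ρ = Real.exp ((n : ℝ) * ρ * (α - β)) := by
    rw [hlam, ← Real.exp_mul]
    congr 1; ring
  have hlamrho1 : 1 ≤ lam ^ ρ := by
    rw [hlamrho]
    exact Real.one_le_exp (mul_nonneg (mul_nonneg (Nat.cast_nonneg n) hρ.le)
      (by linarith : (0:ℝ) ≤ α - β))
  have hlamrho0 : 0 ≤ lam ^ ρ := by linarith
  have hγ1 : 1 ≤ γ := by
    refine le_trans ?_ (le_max_left _ _)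
    refine Real.one_le_exp ?_
    have := Real.add_one_le_exp ρ; linarith
  have hγexp : Real.exp (Real.exp ρ - 1) ≤ γ := le_max_left _ _
  -- integrability of the main integrand
  have hfmeas : Measurable (fun ω => (1 + S ω) ^ ρ) :=
    (measurable_const.add hSmeas).pow_const ρ
  have hfint : Integrable (fun ω => (1 + S ω) ^ ρ) μ := by
    refine (integrable_const ((1 + (N : ℝ)) ^ ρ)).mono' hfmeas.aestronglyMeasurable
      (Filter.Eventually.of_forall fun ω => ?_)
    rw [Real.norm_eq_abs, abs_of_nonneg (Real.rpow_nonneg (by linarith [hS0 ω]) ρ)]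
    exact Real.rpow_le_rpow (by linarith [hS0 ω]) (by linarith [hSN ω]) hρ.le
  -- integrability of exponentials
  have hexpint : ∀ t : ℝ, Integrable (fun ω => Real.exp (t * S ω)) μ := by
    intro t
    refine (integrable_const (Real.exp (|t| * N))).mono'
      ((hSmeas.const_mul t).exp).aestronglyMeasurable (Filter.Eventually.of_forall fun ω => ?_)
    rw [Real.norm_eq_abs, abs_of_pos (Real.exp_pos _), Real.exp_le_exp]
    calc t * S ω ≤ |t| * S ω := mul_le_mul_of_nonneg_right (le_abs_self t) (hS0 ω)
      _ ≤ |t| * N := mul_le_mul_of_nonneg_left (hSN ω) (abs_nonneg t)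
  -- the mgf computation
  have hmgf : ∀ t : ℝ, ∫ ω, Real.exp (t * S ω) ∂μ = (1 + q * (Real.exp t - 1)) ^ N := by
    intro t
    have h1 : ∀ i : Fin N, mgf (X i) μ t = 1 + q * (Real.exp t - 1) := by
      intro i
      have hpt : (fun ω => Real.exp (t * X i ω)) =
          fun ω => 1 + (Real.exp t - 1) * X i ω := by
        funext ω
        rcases hval i ω with h | h <;> rw [h] <;> simp
      rw [mgf, hpt, integral_add (integrable_const 1) ((hXint i).const_mul _),
        integral_const, integral_const_mul, hXval i]
      simp [measure_univ]; ring
    have h2 := hindep.mgf_sum hmeas Finset.univ (t := t)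
    have h3 : mgf (∑ i, X i) μ t = ∫ ω, Real.exp (t * S ω) ∂μ := by
      rw [mgf]
      congr 1; funext ω
      rw [hS]; simp [Finset.sum_apply]
    rw [h3] at h2
    rw [h2]
    simp [h1, Finset.card_univ]
  have hmgf_le : ∀ t : ℝ, 0 ≤ t →
      ∫ ω, Real.exp (t * S ω) ∂μ ≤ Real.exp (u * (Real.exp t - 1)) := by
    intro t ht
    rw [hmgf t]
    have het : 1 ≤ Real.exp t := Real.one_le_exp ht
    have hx : 0 ≤ q * (Real.exp t - 1) := mul_nonneg hq0 (by linarith)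
    calc (1 + q * (Real.exp t - 1)) ^ N ≤ (Real.exp (q * (Real.exp t - 1))) ^ N := by
          apply pow_le_pow_left₀ (by linarith)
          have := Real.add_one_le_exp (q * (Real.exp t - 1)); linarith
      _ = Real.exp ((N : ℝ) * (q * (Real.exp t - 1))) := (Real.exp_nat_mul _ N).symm
      _ = Real.exp (u * (Real.exp t - 1)) := by rw [hu]; ring_nf
  have hgoal : ∫ ω, (1 + ∑ i, X i ω) ^ ρ ∂μ = ∫ ω, (1 + S ω) ^ ρ ∂μ := rfl
  rw [hgoal, ← hlamrho]
  rcases le_or_gt ρ 1 with hρ1 | hρ1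
  · -- Case A : ρ ≤ 1, Bernoulli/concavity trick
    set c := 1 + u with hc
    have hcpos : (0 : ℝ) < c := by simp only [hc]; linarith
    have hkey : ∀ ω, (1 + S ω) ^ ρ ≤ c ^ ρ * ((1 - ρ) + ρ * ((1 + S ω) / c)) := by
      intro ω
      have hx : (0 : ℝ) ≤ 1 + S ω := by linarith [hS0 ω]
      have hz : (0 : ℝ) ≤ (1 + S ω) / c := by positivity
      have hb : ((1 + S ω) / c) ^ ρ * (1 : ℝ) ^ (1 - ρ) ≤ ρ * ((1 + S ω) / c) + (1 - ρ) * 1 :=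
        Real.geom_mean_le_arith_mean2_weighted hρ.le (by linarith) hz zero_le_one
          (by ring)
      rw [Real.one_rpow, mul_one, mul_one] at hb
      have heq : (1 + S ω) ^ ρ = c ^ ρ * ((1 + S ω) / c) ^ ρ := by
        rw [← Real.mul_rpow hcpos.le hz, mul_div_cancel₀ _ hcpos.ne']
      rw [heq]
      apply mul_le_mul_of_nonneg_left _ (Real.rpow_nonneg hcpos.le ρ)
      linarith
    have hrint : Integrable (fun ω => c ^ ρ * ((1 - ρ) + ρ * ((1 + S ω) / c))) μ := by
      apply Integrable.const_mul
      apply Integrable.add (integrable_const _)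
      have h5 : Integrable (fun ω => (ρ / c) * (1 + S ω)) μ :=
        (((integrable_const (1:ℝ)).add hSint).const_mul (ρ / c))
      refine h5.congr (Filter.Eventually.of_forall fun ω => ?_)
      ring
    calc ∫ ω, (1 + S ω) ^ ρ ∂μ
        ≤ ∫ ω, c ^ ρ * ((1 - ρ) + ρ * ((1 + S ω) / c)) ∂μ :=
          integral_mono hfint hrint hkey
      _ = c ^ ρ := by
          rw [integral_const_mul]
          have h6 : (fun ω => (1 - ρ) + ρ * ((1 + S ω) / c)) =
              fun ω => ((1 - ρ) + ρ / c) + (ρ / c) * S ω := by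
            funext ω; field_simp; ring
          rw [h6, integral_add (integrable_const _) (hSint.const_mul (ρ / c)),
            integral_const, integral_const_mul, hSval]
          simp only [probReal_univ, one_smul]
          have h7 : (1 - ρ + ρ / c + ρ / c * u) = 1 := by
            have hcne : c ≠ 0 := hcpos.ne'
            field_simp
            rw [hc]; ring
          rw [h7, mul_one]
      _ ≤ (2 * lam) ^ ρ := by
          apply Real.rpow_le_rpow hcpos.le _ hρ.le
          simp only [hc]; linarith
      _ = 2 ^ ρ * lam ^ ρ := Real.mul_rpow (by norm_num) (by linarith)
      _ ≤ γ * lam ^ ρ := by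
          apply mul_le_mul_of_nonneg_right _ hlamrho0
          refine le_trans ?_ hγexp
          rw [← Real.exp_log (by norm_num : (0:ℝ) < 2), ← Real.exp_mul, Real.exp_le_exp]
          have hlog2 : Real.log 2 ≤ 1 := by
            have := Real.log_le_sub_one_of_pos (by norm_num : (0:ℝ) < 2); linarith
          have h7 := Real.add_one_le_exp ρ
          nlinarith [hρ.le]
  · -- Case ρ > 1
    set m := ⌈ρ⌉₊ with hm
    have hρm : ρ ≤ (m : ℝ) := Nat.le_ceil ρ
    have hm2 : 2 ≤ m := by
      rw [hm]
      exact Nat.lt_ceil.mpr (by exact_mod_cast hρ1)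
    have hm2R : (2 : ℝ) ≤ (m : ℝ) := by exact_mod_cast hm2
    have hγfac : ((Nat.factorial m : ℝ)) ^ 2 * (m : ℝ) ≤ γ := le_max_right _ _
    rcases le_or_gt u 1 with hu1 | hu1
    · -- Case B : u ≤ 1
      have hkey : ∀ ω, (1 + S ω) ^ ρ ≤ Real.exp (ρ * S ω) := by
        intro ω
        have hx : (0 : ℝ) < 1 + S ω := by linarith [hS0 ω]
        rw [Real.rpow_def_of_pos hx, Real.exp_le_exp]
        have h8 : Real.log (1 + S ω) ≤ S ω := by
          have := Real.log_le_sub_one_of_pos hx; linarith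
        nlinarith [hS0 ω, Real.log_nonneg (by linarith [hS0 ω] : (1:ℝ) ≤ 1 + S ω)]
      calc ∫ ω, (1 + S ω) ^ ρ ∂μ ≤ ∫ ω, Real.exp (ρ * S ω) ∂μ :=
            integral_mono hfint (hexpint ρ) hkey
        _ ≤ Real.exp (u * (Real.exp ρ - 1)) := hmgf_le ρ hρ.le
        _ ≤ Real.exp (Real.exp ρ - 1) := by
            rw [Real.exp_le_exp]
            have h9 : 1 ≤ Real.exp ρ := Real.one_le_exp hρ.le
            nlinarith
        _ ≤ γ * lam ^ ρ := by
            calc Real.exp (Real.exp ρ - 1) = Real.exp (Real.exp ρ - 1) * 1 := (mul_one _).symm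
              _ ≤ γ * lam ^ ρ := mul_le_mul hγexp hlamrho1 zero_le_one (by linarith)
    · -- Case C : u > 1
      set t := 1 / (2 * u) with ht
      have hu0' : (0:ℝ) < u := by linarith
      have ht0 : 0 < t := by rw [ht]; positivity
      have ht2 : t ≤ 1 / 2 := by
        rw [ht]
        rw [div_le_div_iff₀ (by linarith) (by norm_num)]
        linarith
      set K := (ρ / (Real.exp 1 * t)) ^ ρ with hK
      have hK0 : 0 ≤ K := Real.rpow_nonneg (by positivity) ρ
      have hkey : ∀ ω, (1 + S ω) ^ ρ ≤ K * Real.exp t * Real.exp (t * S ω) := by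
        intro ω
        have hx : (0 : ℝ) < 1 + S ω := by linarith [hS0 ω]
        calc (1 + S ω) ^ ρ ≤ K * Real.exp (t * (1 + S ω)) := aux_rpow_le_exp hx ht0 hρ
          _ = K * Real.exp t * Real.exp (t * S ω) := by
              rw [mul_assoc, ← Real.exp_add]; ring_nf
      have hbint : Integrable (fun ω => K * Real.exp t * Real.exp (t * S ω)) μ :=
        (hexpint t).const_mul _
      have hmain : ∫ ω, (1 + S ω) ^ ρ ∂μ ≤ K * Real.exp t * Real.exp (u * (Real.exp t - 1)) := by
        calc ∫ ω, (1 + S ω) ^ ρ ∂μ ≤ ∫ ω, K * Real.exp t * Real.exp (t * S ω) ∂μ :=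
              integral_mono hfint hbint hkey
          _ = K * Real.exp t * ∫ ω, Real.exp (t * S ω) ∂μ := integral_const_mul _ _
          _ ≤ K * Real.exp t * Real.exp (u * (Real.exp t - 1)) := by
              apply mul_le_mul_of_nonneg_left (hmgf_le t ht0.le) (by positivity)
      -- bound the pieces
      have hKeq : K = (2 * ρ / Real.exp 1) ^ ρ * u ^ ρ := by
        rw [hK, ← Real.mul_rpow (by positivity) (by linarith)]
        congr 1
        rw [ht]; field_simp
      have hquad : u * (Real.exp t - 1) ≤ 11 / 16 := by
        have hb := Real.exp_bound' ht0.le (by linarith : t ≤ 1) (n := 2) (by norm_num)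
        have hb2 : Real.exp t ≤ 1 + t + (3 / 4) * t ^ 2 := by
          have : (∑ i ∈ Finset.range 2, t ^ i / (Nat.factorial i)) = 1 + t := by
            simp [Finset.sum_range_succ]
          rw [this] at hb
          calc Real.exp t ≤ 1 + t + t ^ 2 * (2 + 1) / (Nat.factorial 2 * 2) := hb
            _ = 1 + t + (3 / 4) * t ^ 2 := by norm_num [Nat.factorial]; ring
        have hut : u * t = 1 / 2 := by rw [ht]; field_simp
        have hut2 : u * t ^ 2 ≤ 1 / 4 := by
          calc u * t ^ 2 = (u * t) * t := by ring
            _ = (1 / 2) * t := by rw [hut]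
            _ ≤ (1 / 2) * (1 / 2) := by linarith
            _ = 1 / 4 := by norm_num
        nlinarith
      have hexpt : Real.exp t ≤ Real.exp (1 / 2) := Real.exp_le_exp.mpr ht2
      have hC : Real.exp t * Real.exp (u * (Real.exp t - 1)) ≤ Real.exp (19 / 16) := by
        calc Real.exp t * Real.exp (u * (Real.exp t - 1))
            ≤ Real.exp (1 / 2) * Real.exp (11 / 16) :=
              mul_le_mul hexpt (Real.exp_le_exp.mpr hquad) (Real.exp_pos _).le
                (Real.exp_pos _).le
          _ = Real.exp (19 / 16) := by rw [← Real.exp_add]; norm_num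
      -- numeric: (2/e)^2 * exp(19/16) ≤ 2
      have hnum : (2 / Real.exp 1) ^ (2:ℕ) * Real.exp (19 / 16) ≤ 2 := by
        have he1 : (2.7182818283 : ℝ) < Real.exp 1 := Real.exp_one_gt_d9
        have h316 : Real.exp (3 / 16) ≤ (16 : ℝ) / 13 := by
          have := aux_exp_le_inv_one_sub (by norm_num : (3:ℝ)/16 < 1)
          calc Real.exp (3/16) ≤ (1 - 3/16 : ℝ)⁻¹ := this
            _ = 16 / 13 := by norm_num
        have hsplit : Real.exp 1 = Real.exp (3/16) * Real.exp (13/16) := by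
          rw [← Real.exp_add]; norm_num
        have h1316 : (2 : ℝ) ≤ Real.exp (13 / 16) := by
          nlinarith [Real.exp_pos (3/16 : ℝ), Real.exp_pos (13/16 : ℝ)]
        have hsplit2 : Real.exp (19/16) * 2 ≤ Real.exp (19/16) * Real.exp (13/16) := by
          nlinarith [Real.exp_pos (19/16 : ℝ)]
        have hsplit3 : Real.exp (19/16) * Real.exp (13/16) = Real.exp 1 * Real.exp 1 := by
          rw [← Real.exp_add, ← Real.exp_add]; norm_num
        rw [div_pow]
        rw [div_mul_eq_mul_div, div_le_iff₀ (by positivity)]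
        calc (2:ℝ)^(2:ℕ) * Real.exp (19/16) = 2 * (Real.exp (19/16) * 2) := by ring
          _ ≤ 2 * (Real.exp 1 * Real.exp 1) := by nlinarith [Real.exp_pos (19/16 : ℝ)]
          _ = 2 * Real.exp 1 ^ (2:ℕ) := by ring
      -- constant bound : (2ρ/e)^ρ * exp(19/16) ≤ (m!)^2 * m
      have hconst : (2 * ρ / Real.exp 1) ^ ρ * Real.exp (19 / 16) ≤
          ((Nat.factorial m : ℝ)) ^ 2 * (m : ℝ) := by
        have hbase1 : (1 : ℝ) ≤ 2 * (m : ℝ) / Real.exp 1 := by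
          rw [le_div_iff₀ (Real.exp_pos 1)]
          have := Real.exp_one_lt_d9
          nlinarith
        have hb1 : (2 * ρ / Real.exp 1) ^ ρ ≤ (2 * (m : ℝ) / Real.exp 1) ^ ρ :=
          Real.rpow_le_rpow (by positivity)
            ((div_le_div_iff_of_pos_right (Real.exp_pos 1)).mpr (by linarith)) hρ.le
        have hb2 : (2 * (m : ℝ) / Real.exp 1) ^ ρ ≤ (2 * (m : ℝ) / Real.exp 1) ^ (m : ℝ) :=
          Real.rpow_le_rpow_of_exponent_le hbase1 hρm
        have hb3 : (2 * (m : ℝ) / Real.exp 1) ^ (m : ℝ) = (2 / Real.exp 1) ^ (m:ℕ) * (m : ℝ) ^ (m:ℕ) := by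
          rw [Real.rpow_natCast, ← mul_pow]
          congr 1
          ring
        have hb4 : (2 / Real.exp 1) ^ (m:ℕ) ≤ (2 / Real.exp 1) ^ (2:ℕ) := by
          apply pow_le_pow_of_le_one (by positivity) _ hm2
          rw [div_le_one (Real.exp_pos 1)]
          have := Real.exp_one_gt_d9; linarith
        have hb5 : (m : ℝ) ^ (m:ℕ) ≤ ((Nat.factorial m : ℝ)) ^ 2 := by
          exact_mod_cast Nat.cast_le.mpr (aux_pow_self_le_sq_factorial m)
        have hmm0 : (0:ℝ) ≤ (m : ℝ) ^ (m:ℕ) := by positivity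
        calc (2 * ρ / Real.exp 1) ^ ρ * Real.exp (19 / 16)
            ≤ (2 * (m : ℝ) / Real.exp 1) ^ (m : ℝ) * Real.exp (19 / 16) := by
              apply mul_le_mul_of_nonneg_right (le_trans hb1 hb2) (Real.exp_pos _).le
          _ = (m : ℝ) ^ (m:ℕ) * ((2 / Real.exp 1) ^ (m:ℕ) * Real.exp (19 / 16)) := by
              rw [hb3]; ring
          _ ≤ (m : ℝ) ^ (m:ℕ) * ((2 / Real.exp 1) ^ (2:ℕ) * Real.exp (19 / 16)) := by
              apply mul_le_mul_of_nonneg_left _ hmm0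
              apply mul_le_mul_of_nonneg_right hb4 (Real.exp_pos _).le
          _ ≤ (m : ℝ) ^ (m:ℕ) * 2 := mul_le_mul_of_nonneg_left hnum hmm0
          _ ≤ ((Nat.factorial m : ℝ)) ^ 2 * (m : ℝ) := by
              calc (m : ℝ) ^ (m:ℕ) * 2 ≤ ((Nat.factorial m : ℝ)) ^ 2 * 2 :=
                    mul_le_mul_of_nonneg_right hb5 (by norm_num)
                _ ≤ ((Nat.factorial m : ℝ)) ^ 2 * (m : ℝ) := by
                    apply mul_le_mul_of_nonneg_left hm2R (by positivity)
      -- put everything together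
      have hurho : u ^ ρ ≤ lam ^ ρ := Real.rpow_le_rpow (by linarith) hulam hρ.le
      calc ∫ ω, (1 + S ω) ^ ρ ∂μ
          ≤ K * Real.exp t * Real.exp (u * (Real.exp t - 1)) := hmain
        _ = (2 * ρ / Real.exp 1) ^ ρ * u ^ ρ * (Real.exp t * Real.exp (u * (Real.exp t - 1))) := by
            rw [hKeq]; ring
        _ ≤ (2 * ρ / Real.exp 1) ^ ρ * u ^ ρ * Real.exp (19 / 16) := by
            apply mul_le_mul_of_nonneg_left hC (by positivity)
        _ = ((2 * ρ / Real.exp 1) ^ ρ * Real.exp (19 / 16)) * u ^ ρ := by ring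
        _ ≤ (((Nat.factorial m : ℝ)) ^ 2 * (m : ℝ)) * lam ^ ρ := by
            apply mul_le_mul hconst hurho (Real.rpow_nonneg (by linarith) ρ)
            positivity
        _ ≤ γ * lam ^ ρ := mul_le_mul_of_nonneg_right hγfac hlamrho0
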